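/- For every integer p ≥ 1 and every n ≥ 0, the higher order Fubini number satisfies F_n^p = Σ_{k=0}^∞ B_n^{p−1}(k)/2^{k+1}, the series being convergent. (For p = 1 this is the classical formula F_n = Σ_{k≥0} k^n/2^{k+1}.) -/

import Mathlib

/-- Stirling numbers of the second kind. -/
def S2 : ℕ → ℕ → ℕ
  | 0, 0 => 1
  | 0, _ + 1 => 0
  | _ + 1, 0 => 0
  | n + 1, m + 1 => (m + 1) * S2 n (m + 1) + S2 n m

/-- Entries `S^p_{n,m}` of the `p`-th power of the Stirling matrix (for `p ≥ 1`;
the value at `p = 0` is junk). -/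
def Sp : ℕ → ℕ → ℕ → ℕ
  | 0, _, _ => 0
  | 1, n, m => S2 n m
  | p + 2, n, m => ∑ k ∈ Finset.range (n + 1), S2 n k * Sp (p + 1) k m

/-- Higher order Bell polynomials: `B_n^0(x) = x^n`, `B_n^p(x) = ∑_{m=0}^n S^p_{n,m} x^m`. -/
noncomputable def BellP : ℕ → ℕ → ℝ → ℝ
  | 0, n, x => x ^ n
  | p + 1, n, x => ∑ m ∈ Finset.range (n + 1), (Sp (p + 1) n m : ℝ) * x ^ m

/-- Higher order Fubini polynomials: `F_n^p(x) = ∑_{m=0}^n S^p_{n,m} m! x^m`. -/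
noncomputable def FubPoly (p n : ℕ) (x : ℝ) : ℝ :=
  ∑ m ∈ Finset.range (n + 1), (Sp p n m : ℝ) * m.factorial * x ^ m

/-- Higher order Fubini numbers: `F_n^p = F_n^p(1)`. -/
noncomputable def FubNum (p n : ℕ) : ℝ := FubPoly p n 1

lemma S2_eq_zero : ∀ n m, n < m → S2 n m = 0 := by
  intro n
  induction n with
  | zero =>
    intro m hm
    match m, hm with
    | m + 1, _ => rfl
  | succ n ih =>
    intro m hm
    match m, hm with
    | m + 1, hm =>
      have h1 : S2 n (m + 1) = 0 := ih (m + 1) (by omega)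
      have h2 : S2 n m = 0 := ih m (by omega)
      show (m + 1) * S2 n (m + 1) + S2 n m = 0
      simp [h1, h2]

lemma Sp_eq_zero : ∀ p n m, n < m → Sp (p + 1) n m = 0 := by
  intro p
  induction p with
  | zero => intro n m h; exact S2_eq_zero n m h
  | succ p ih =>
    intro n m h
    show (∑ k ∈ Finset.range (n + 1), S2 n k * Sp (p + 1) k m) = 0
    refine Finset.sum_eq_zero fun k hk => ?_
    rw [ih k m (by simp only [Finset.mem_range] at hk; omega), mul_zero]

lemma pow_eq_sum_descFactorial (n : ℕ) :
    ∀ k : ℕ, k ^ n = ∑ m ∈ Finset.range (n + 1), S2 n m * k.descFactorial m := by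
  induction n with
  | zero => intro k; simp [S2]
  | succ n ih =>
    intro k
    have key : ∀ m, k * k.descFactorial m =
        k.descFactorial (m + 1) + m * k.descFactorial m := by
      intro m
      rcases le_or_gt m k with h | h
      · rw [Nat.descFactorial_succ]
        calc k * k.descFactorial m = ((k - m) + m) * k.descFactorial m := by
              rw [Nat.sub_add_cancel h]
          _ = (k - m) * k.descFactorial m + m * k.descFactorial m := Nat.add_mul _ _ _
      · have h1 : k.descFactorial m = 0 := Nat.descFactorial_eq_zero_iff_lt.2 h
        have h2 : k.descFactorial (m + 1) = 0 := Nat.descFactorial_eq_zero_iff_lt.2 (by omega)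
        simp [h1, h2]
    have lhs1 : k ^ (n + 1) =
        ∑ m ∈ Finset.range (n + 1), S2 n m * (k.descFactorial (m + 1) + m * k.descFactorial m) := by
      rw [pow_succ, mul_comm, ih k, Finset.mul_sum]
      refine Finset.sum_congr rfl fun m _ => ?_
      rw [← key m]; ring
    rw [lhs1]
    have rhs1 : ∑ m ∈ Finset.range (n + 2), S2 (n + 1) m * k.descFactorial m =
        ∑ m ∈ Finset.range (n + 1), S2 (n + 1) (m + 1) * k.descFactorial (m + 1) := by
      rw [Finset.sum_range_succ']
      simp [show S2 (n + 1) 0 = 0 from rfl]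
    rw [rhs1]
    have rhs2 : ∀ m, S2 (n + 1) (m + 1) * k.descFactorial (m + 1) =
        (m + 1) * S2 n (m + 1) * k.descFactorial (m + 1) +
          S2 n m * k.descFactorial (m + 1) := fun m => by
      show ((m + 1) * S2 n (m + 1) + S2 n m) * k.descFactorial (m + 1) = _
      ring
    have hB : ∑ m ∈ Finset.range (n + 1), S2 n m * (m * k.descFactorial m)
        = ∑ m ∈ Finset.range (n + 1),
            (m + 1) * S2 n (m + 1) * k.descFactorial (m + 1) := by
      rw [Finset.sum_range_succ' (fun m => S2 n m * (m * k.descFactorial m)) n,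
        Finset.sum_range_succ]
      simp only [Nat.mul_zero, Nat.zero_mul, Nat.add_zero, Nat.mul_one,
        S2_eq_zero n (n + 1) (by omega), Nat.zero_mul, Nat.mul_zero, Nat.add_zero]
      refine Finset.sum_congr rfl fun m _ => ?_
      ring
    simp only [rhs2, Nat.mul_add, Finset.sum_add_distrib, hB]
    exact add_comm _ _

lemma hasSum_choose_half (m : ℕ) :
    HasSum (fun k : ℕ => (k.choose m : ℝ) * (1 / 2 : ℝ) ^ (k + 1)) 1 := by
  have h0 : ‖(1 / 2 : ℝ)‖ < 1 := by
    rw [Real.norm_eq_abs, abs_of_pos] <;> norm_num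
  have h1 := hasSum_choose_mul_geometric_of_norm_lt_one (𝕜 := ℝ) m h0
  have h2 : HasSum (fun j : ℕ => ((j + m).choose m : ℝ) * (1 / 2 : ℝ) ^ (j + m + 1))
      ((1 / (1 - 1 / 2 : ℝ) ^ (m + 1)) * (1 / 2 : ℝ) ^ (m + 1)) := by
    have := h1.mul_right ((1 / 2 : ℝ) ^ (m + 1))
    convert this using 2 with j
    case e'_3 => rfl
    rw [show j + m + 1 = j + (m + 1) by omega, pow_add]
    ring
  have hval : (1 / (1 - 1 / 2 : ℝ) ^ (m + 1)) * (1 / 2 : ℝ) ^ (m + 1) = 1 := by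
    norm_num
  rw [hval] at h2
  have h3 := (hasSum_nat_add_iff (f := fun k : ℕ => (k.choose m : ℝ) * (1 / 2 : ℝ) ^ (k + 1))
    m).1 h2
  have hzero : ∑ i ∈ Finset.range m, ((i.choose m : ℝ) * (1 / 2 : ℝ) ^ (i + 1)) = 0 := by
    refine Finset.sum_eq_zero fun i hi => ?_
    rw [Nat.choose_eq_zero_of_lt (Finset.mem_range.1 hi)]
    simp
  rwa [hzero, add_zero] at h3

lemma hasSum_base (n : ℕ) :
    HasSum (fun k : ℕ => (k : ℝ) ^ n / 2 ^ (k + 1)) (FubNum 1 n) := by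
  have hm : ∀ m : ℕ, HasSum
      (fun k : ℕ => ((S2 n m : ℝ) * m.factorial) * ((k.choose m : ℝ) * (1 / 2 : ℝ) ^ (k + 1)))
      ((S2 n m : ℝ) * m.factorial) := by
    intro m
    simpa using (hasSum_choose_half m).mul_left ((S2 n m : ℝ) * m.factorial)
  have h := hasSum_sum (s := Finset.range (n + 1)) fun m _ => hm m
  have hfun : ∀ k : ℕ, (k : ℝ) ^ n / 2 ^ (k + 1) = ∑ m ∈ Finset.range (n + 1),
      ((S2 n m : ℝ) * m.factorial) * ((k.choose m : ℝ) * (1 / 2 : ℝ) ^ (k + 1)) := by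
    intro k
    have hk : ((k : ℝ)) ^ n = ∑ m ∈ Finset.range (n + 1),
        (S2 n m : ℝ) * (m.factorial : ℝ) * (k.choose m : ℝ) := by
      rw [show ((k : ℝ)) ^ n = ((k ^ n : ℕ) : ℝ) by push_cast; ring,
        pow_eq_sum_descFactorial n k]
      simp only [Nat.descFactorial_eq_factorial_mul_choose]
      push_cast
      exact Finset.sum_congr rfl fun m _ => by ring
    calc (k : ℝ) ^ n / 2 ^ (k + 1) = (k : ℝ) ^ n * (1 / 2 : ℝ) ^ (k + 1) := by
          rw [div_eq_mul_inv, ← inv_pow]; norm_num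
      _ = ∑ m ∈ Finset.range (n + 1),
            ((S2 n m : ℝ) * (m.factorial : ℝ) * (k.choose m : ℝ)) * (1 / 2 : ℝ) ^ (k + 1) := by
          rw [hk, Finset.sum_mul]
      _ = _ := Finset.sum_congr rfl fun m _ => by ring
  have hFub : FubNum 1 n = ∑ m ∈ Finset.range (n + 1), (S2 n m : ℝ) * m.factorial := by
    unfold FubNum FubPoly
    refine Finset.sum_congr rfl fun m _ => ?_
    show (Sp 1 n m : ℝ) * m.factorial * 1 ^ m = _
    simp [show Sp 1 n m = S2 n m from rfl]
  rw [hFub]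
  exact h.congr_fun hfun

lemma BellP_rec (p n : ℕ) (x : ℝ) :
    BellP (p + 1) n x = ∑ k ∈ Finset.range (n + 1), (S2 n k : ℝ) * BellP p k x := by
  cases p with
  | zero =>
    show (∑ m ∈ Finset.range (n + 1), (Sp 1 n m : ℝ) * x ^ m) = _
    refine Finset.sum_congr rfl fun m _ => ?_
    show (S2 n m : ℝ) * x ^ m = (S2 n m : ℝ) * x ^ m
    rfl
  | succ p =>
    show (∑ m ∈ Finset.range (n + 1), (Sp (p + 2) n m : ℝ) * x ^ m) = _
    have hSp : ∀ m, (Sp (p + 2) n m : ℝ)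
        = ∑ k ∈ Finset.range (n + 1), (S2 n k : ℝ) * (Sp (p + 1) k m : ℝ) := by
      intro m
      show ((∑ k ∈ Finset.range (n + 1), S2 n k * Sp (p + 1) k m : ℕ) : ℝ) = _
      push_cast
      rfl
    calc (∑ m ∈ Finset.range (n + 1), (Sp (p + 2) n m : ℝ) * x ^ m)
        = ∑ m ∈ Finset.range (n + 1), ∑ k ∈ Finset.range (n + 1),
            (S2 n k : ℝ) * ((Sp (p + 1) k m : ℝ) * x ^ m) := by
          refine Finset.sum_congr rfl fun m _ => ?_
          rw [hSp m, Finset.sum_mul]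
          refine Finset.sum_congr rfl fun k _ => by ring
      _ = ∑ k ∈ Finset.range (n + 1), ∑ m ∈ Finset.range (n + 1),
            (S2 n k : ℝ) * ((Sp (p + 1) k m : ℝ) * x ^ m) := Finset.sum_comm
      _ = ∑ k ∈ Finset.range (n + 1), (S2 n k : ℝ) * BellP (p + 1) k x := by
          refine Finset.sum_congr rfl fun k hk => ?_
          rw [← Finset.mul_sum]
          congr 1
          show (∑ m ∈ Finset.range (n + 1), (Sp (p + 1) k m : ℝ) * x ^ m)
            = ∑ m ∈ Finset.range (k + 1), (Sp (p + 1) k m : ℝ) * x ^ m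
          refine (Finset.sum_subset ?_ ?_).symm
          · intro m hmm
            have hk' : k < n + 1 := Finset.mem_range.1 hk
            have hm' : m < k + 1 := Finset.mem_range.1 hmm
            exact Finset.mem_range.2 (by omega)
          · intro m _ hmm
            simp only [Finset.mem_range, not_lt] at hmm
            rw [Sp_eq_zero p k m (by omega)]
            simp

lemma FubNum_rec (p n : ℕ) :
    FubNum (p + 2) n = ∑ k ∈ Finset.range (n + 1), (S2 n k : ℝ) * FubNum (p + 1) k := by
  unfold FubNum FubPoly
  have hSp : ∀ m, (Sp (p + 2) n m : ℝ)
      = ∑ k ∈ Finset.range (n + 1), (S2 n k : ℝ) * (Sp (p + 1) k m : ℝ) := by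
    intro m
    show ((∑ k ∈ Finset.range (n + 1), S2 n k * Sp (p + 1) k m : ℕ) : ℝ) = _
    push_cast
    rfl
  calc (∑ m ∈ Finset.range (n + 1), (Sp (p + 2) n m : ℝ) * m.factorial * 1 ^ m)
      = ∑ m ∈ Finset.range (n + 1), ∑ k ∈ Finset.range (n + 1),
          (S2 n k : ℝ) * ((Sp (p + 1) k m : ℝ) * m.factorial * 1 ^ m) := by
        refine Finset.sum_congr rfl fun m _ => ?_
        rw [hSp m, Finset.sum_mul, Finset.sum_mul]
        refine Finset.sum_congr rfl fun k _ => by ring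
    _ = ∑ k ∈ Finset.range (n + 1), ∑ m ∈ Finset.range (n + 1),
          (S2 n k : ℝ) * ((Sp (p + 1) k m : ℝ) * m.factorial * 1 ^ m) := Finset.sum_comm
    _ = _ := by
        refine Finset.sum_congr rfl fun k hk => ?_
        rw [← Finset.mul_sum]
        congr 1
        refine (Finset.sum_subset ?_ ?_).symm
        · intro m hmm
          have hk' : k < n + 1 := Finset.mem_range.1 hk
          have hm' : m < k + 1 := Finset.mem_range.1 hmm
          exact Finset.mem_range.2 (by omega)
        · intro m _ hmm
          simp only [Finset.mem_range, not_lt] at hmm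
          rw [Sp_eq_zero p k m (by omega)]
          simp

lemma main_aux : ∀ p, 1 ≤ p → ∀ n,
    HasSum (fun k : ℕ => BellP (p - 1) n (k : ℝ) / 2 ^ (k + 1)) (FubNum p n) := by
  intro p hp
  induction p, hp using Nat.le_induction with
  | base =>
    intro n
    have := hasSum_base n
    simpa [BellP] using this
  | succ p hp ih =>
    intro n
    obtain ⟨q, rfl⟩ : ∃ q, p = q + 1 := ⟨p - 1, (Nat.succ_pred_eq_of_pos hp).symm⟩
    simp only [Nat.add_sub_cancel] at ih ⊢
    have h1 : ∀ j : ℕ, HasSum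
        (fun k : ℕ => (S2 n j : ℝ) * (BellP q j (k : ℝ) / 2 ^ (k + 1)))
        ((S2 n j : ℝ) * FubNum (q + 1) j) := fun j => (ih j).mul_left _
    have h2 := hasSum_sum (s := Finset.range (n + 1)) fun j _ => h1 j
    rw [← FubNum_rec q n] at h2
    refine h2.congr_fun fun k => ?_
    rw [BellP_rec q n (k : ℝ), Finset.sum_div]
    refine Finset.sum_congr rfl fun j _ => by ring

/-- `F_n^p = ∑_{k≥0} B_n^{p-1}(k) / 2^{k+1}`, the series being convergent. -/
theorem fubini_eq_bell_sum (p : ℕ) (hp : 1 ≤ p) (n : ℕ) :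
    Summable (fun k : ℕ => BellP (p - 1) n (k : ℝ) / 2 ^ (k + 1)) ∧
      FubNum p n = ∑' k : ℕ, BellP (p - 1) n (k : ℝ) / 2 ^ (k + 1) := by
  exact ⟨(main_aux p hp n).summable, (main_aux p hp n).tsum_eq.symm⟩
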